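/- Let Z be the number of bins containing at least two balls when x balls are allocated independently and uniformly at random into N bins, where 2 ≤ x ≤ N. Then E[Z] = N(1 - (x/N)(1-1/N)^{x-1} - (1-1/N)^x), and E[Z] ≥ x(x-1)/(6N). -/

import Mathlib

open Finset


lemma count_ge_two (x N : ℕ) (b : Fin N) :
    (∑ ω : Fin x → Fin N,
        (if 2 ≤ (univ.filter (fun i : Fin x => ω i = b)).card then (1:ℝ) else 0))
      = (N:ℝ)^x - ((N:ℝ)-1)^x - (x:ℝ) * ((N:ℝ)-1)^(x-1) := by
  classical
  -- sum over all y of "≠ b" indicator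
  have hsumne : (∑ y : Fin N, (if y = b then (0:ℝ) else 1)) = (N:ℝ) - 1 := by
    have : ∀ y : Fin N, (if y = b then (0:ℝ) else 1) = 1 - (if y = b then 1 else 0) := by
      intro y; by_cases h : y = b <;> simp [h]
    rw [Finset.sum_congr rfl (fun y _ => this y), Finset.sum_sub_distrib]
    simp [Finset.sum_ite_eq']
  -- count of zero occupancy
  have h0 : (∑ ω : Fin x → Fin N,
      (if (univ.filter (fun i : Fin x => ω i = b)).card = 0 then (1:ℝ) else 0))
      = ((N:ℝ)-1)^x := by
    have hpt : ∀ ω : Fin x → Fin N,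
        (if (univ.filter (fun i : Fin x => ω i = b)).card = 0 then (1:ℝ) else 0)
          = ∏ i : Fin x, (if ω i = b then (0:ℝ) else 1) := by
      intro ω
      by_cases h : ∃ i, ω i = b
      · obtain ⟨i, hi⟩ := h
        rw [Finset.prod_eq_zero (mem_univ i) (by simp [hi])]
        have hne : (univ.filter (fun i : Fin x => ω i = b)).card ≠ 0 := by
          rw [Finset.card_ne_zero, Finset.filter_nonempty_iff]
          exact ⟨i, mem_univ i, hi⟩
        simp [hne]
      · push_neg at h
        rw [Finset.prod_eq_one (fun i _ => by simp [h i])]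
        simp [Finset.card_eq_zero, Finset.filter_eq_empty_iff, h]
    rw [Finset.sum_congr rfl (fun ω _ => hpt ω), ← Fintype.prod_sum (fun _ y => if y = b then (0:ℝ) else 1)]
    rw [Finset.prod_congr rfl (fun i _ => hsumne)]
    simp
  -- count of exactly-one occupancy
  have h1 : (∑ ω : Fin x → Fin N,
      (if (univ.filter (fun i : Fin x => ω i = b)).card = 1 then (1:ℝ) else 0))
      = (x:ℝ) * ((N:ℝ)-1)^(x-1) := by
    set g : Fin x → Fin x → Fin N → ℝ := fun i j y =>
      if j = i then (if y = b then 1 else 0) else (if y = b then 0 else 1) with hg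
    have hpt : ∀ ω : Fin x → Fin N,
        (if (univ.filter (fun i : Fin x => ω i = b)).card = 1 then (1:ℝ) else 0)
          = ∑ i : Fin x, ∏ j : Fin x, g i j (ω j) := by
      intro ω
      set s := univ.filter (fun i : Fin x => ω i = b) with hs
      have hmem : ∀ j, j ∈ s ↔ ω j = b := by intro j; simp [hs]
      have hterm : ∀ i : Fin x,
          (∏ j : Fin x, g i j (ω j)) = if s = {i} then 1 else 0 := by
        intro i
        by_cases hsi : s = {i}
        · rw [if_pos hsi]
          apply Finset.prod_eq_one
          intro j _
          by_cases hji : j = i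
          · subst hji
            have hjb : ω j = b := (hmem j).mp (by rw [hsi]; exact mem_singleton_self j)
            simp [hg, hjb]
          · have hjb : ω j ≠ b := by
              intro h
              have hjs := (hmem j).mpr h
              rw [hsi] at hjs
              exact hji (mem_singleton.mp hjs)
            simp [hg, hji, hjb]
        · rw [if_neg hsi]
          by_cases hib : ω i = b
          · have : ∃ j, j ≠ i ∧ ω j = b := by
              by_contra hcon
              push_neg at hcon
              apply hsi
              ext j
              simp only [hmem, mem_singleton]
              constructor
              · intro hj; by_contra hji; exact (hcon j hji) hj
              · intro hj; rw [hj]; exact hib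
            obtain ⟨j, hji, hjb⟩ := this
            exact Finset.prod_eq_zero (mem_univ j) (by simp [hg, hji, hjb])
          · exact Finset.prod_eq_zero (mem_univ i) (by simp [hg, hib])
      rw [Finset.sum_congr rfl (fun i _ => hterm i)]
      by_cases h1c : s.card = 1
      · obtain ⟨i0, hi0⟩ := Finset.card_eq_one.mp h1c
        rw [if_pos h1c]
        have : ∀ i : Fin x, (if s = {i} then (1:ℝ) else 0) = if i = i0 then 1 else 0 := by
          intro i
          rw [hi0]
          by_cases h : i = i0
          · simp [h]
          · have h' : i0 ≠ i := fun hh => h hh.symm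
            simp [h, h', Finset.singleton_inj]
        rw [Finset.sum_congr rfl (fun i _ => this i)]
        simp [Finset.sum_ite_eq']
      · rw [if_neg h1c]
        symm
        apply Finset.sum_eq_zero
        intro i _
        have : s ≠ {i} := fun h => h1c (by rw [h]; simp)
        simp [this]
    rw [Finset.sum_congr rfl (fun ω _ => hpt ω), Finset.sum_comm]
    have hterm2 : ∀ i : Fin x,
        (∑ ω : Fin x → Fin N, ∏ j : Fin x, g i j (ω j)) = ((N:ℝ)-1)^(x-1) := by
      intro i
      rw [← Fintype.prod_sum (fun j y => g i j y)]
      have hinner : ∀ j : Fin x, (∑ y : Fin N, g i j y) = if j = i then 1 else (N:ℝ)-1 := by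
        intro j
        by_cases hji : j = i
        · simp [hg, hji, Finset.sum_ite_eq']
        · simp only [hg, if_neg hji]
          exact hsumne
      rw [Finset.prod_congr rfl (fun j _ => hinner j)]
      rw [← Finset.mul_prod_erase univ _ (mem_univ i), if_pos rfl, one_mul]
      rw [Finset.prod_congr rfl (fun j hj => if_neg (Finset.ne_of_mem_erase hj))]
      rw [Finset.prod_const, Finset.card_erase_of_mem (mem_univ i)]
      simp
    rw [Finset.sum_congr rfl (fun i _ => hterm2 i), Finset.sum_const]
    simp [mul_comm]
  -- total count
  have htot : (∑ ω : Fin x → Fin N, (1:ℝ)) = (N:ℝ)^x := by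
    simp [Finset.card_univ]
  have hpt2 : ∀ ω : Fin x → Fin N,
      (if 2 ≤ (univ.filter (fun i : Fin x => ω i = b)).card then (1:ℝ) else 0)
        = 1 - (if (univ.filter (fun i : Fin x => ω i = b)).card = 0 then (1:ℝ) else 0)
            - (if (univ.filter (fun i : Fin x => ω i = b)).card = 1 then (1:ℝ) else 0) := by
    intro ω
    rcases (univ.filter (fun i : Fin x => ω i = b)).card with _ | _ | c <;> simp
  rw [Finset.sum_congr rfl (fun ω _ => hpt2 ω)]
  rw [Finset.sum_sub_distrib, Finset.sum_sub_distrib, htot, h0, h1]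

lemma aux_third (N : ℕ) (hN : 2 ≤ N) : (1:ℝ)/3 ≤ (((N:ℝ)-1)/N)^(N-2) := by
  have hN2 : (2:ℝ) ≤ (N:ℝ) := by exact_mod_cast hN
  have hN1 : (1:ℝ) ≤ (N:ℝ) - 1 := by linarith
  have hNpos : (0:ℝ) < N := by linarith
  set A := (1 + 1/((N:ℝ)-1))^(N-2) with hA
  have hApos : 0 < A := by positivity
  have hA3 : A ≤ 3 := by
    have h1 : (1:ℝ) + 1/((N:ℝ)-1) ≤ Real.exp (1/((N:ℝ)-1)) := by
      have := Real.add_one_le_exp (1/((N:ℝ)-1)); linarith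
    have h2 : A ≤ Real.exp (1/((N:ℝ)-1)) ^ (N-2) :=
      pow_le_pow_left₀ (by positivity) h1 _
    rw [← Real.exp_nat_mul] at h2
    have h3 : ((N-2:ℕ):ℝ) * (1/((N:ℝ)-1)) ≤ 1 := by
      rw [mul_one_div, div_le_one (by linarith)]
      have : ((N-2:ℕ):ℝ) ≤ ((N-1:ℕ):ℝ) := by exact_mod_cast Nat.sub_le_sub_left (by norm_num) N
      have h4 : ((N-1:ℕ):ℝ) = (N:ℝ) - 1 := by
        push_cast [Nat.cast_sub (by omega : 1 ≤ N)]; ring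
      linarith
    have := Real.exp_one_lt_d9
    calc A ≤ Real.exp (((N-2:ℕ):ℝ) * (1/((N:ℝ)-1))) := h2
      _ ≤ Real.exp 1 := Real.exp_le_exp.mpr h3
      _ ≤ 3 := by linarith
  have hq : (((N:ℝ)-1)/N)^(N-2) = 1/A := by
    rw [eq_div_iff (ne_of_gt hApos), hA, ← mul_pow]
    have : ((N:ℝ)-1)/N * (1 + 1/((N:ℝ)-1)) = 1 := by field_simp; ring
    rw [this, one_pow]
  rw [hq]
  exact one_div_le_one_div_of_le hApos hA3

/-- Z = number of bins with at least two balls when x balls are placed uniformly at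
random into N bins (2 ≤ x ≤ N).  Then
E[Z] = N(1 - (x/N)(1-1/N)^{x-1} - (1-1/N)^x) and E[Z] ≥ x(x-1)/(6N). -/
theorem stmt_8 (x N : ℕ) (hx : 2 ≤ x) (hxN : x ≤ N) :
    ((∑ ω : Fin x → Fin N,
        ((univ.filter (fun b : Fin N => 2 ≤ (univ.filter (fun i : Fin x => ω i = b)).card)).card
          : ℝ)) / (N : ℝ) ^ x
      = (N : ℝ) * (1 - ((x : ℝ) / N) * (1 - 1 / (N : ℝ)) ^ (x - 1) - (1 - 1 / (N : ℝ)) ^ x)) ∧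
    (x : ℝ) * ((x : ℝ) - 1) / (6 * N) ≤
      (∑ ω : Fin x → Fin N,
        ((univ.filter (fun b : Fin N => 2 ≤ (univ.filter (fun i : Fin x => ω i = b)).card)).card
          : ℝ)) / (N : ℝ) ^ x := by
  classical
  have hN2 : 2 ≤ N := hx.trans hxN
  have hN2' : (2:ℝ) ≤ N := by exact_mod_cast hN2
  have hNpos : (0:ℝ) < N := by linarith
  have hS : (∑ ω : Fin x → Fin N,
      ((univ.filter (fun b : Fin N => 2 ≤ (univ.filter (fun i : Fin x => ω i = b)).card)).card : ℝ))
      = (N:ℝ) * ((N:ℝ)^x - ((N:ℝ)-1)^x - (x:ℝ) * ((N:ℝ)-1)^(x-1)) := by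
    have hcard : ∀ ω : Fin x → Fin N,
        (((univ.filter (fun b : Fin N => 2 ≤ (univ.filter (fun i : Fin x => ω i = b)).card)).card : ℝ))
        = ∑ b : Fin N, (if 2 ≤ (univ.filter (fun i : Fin x => ω i = b)).card then (1:ℝ) else 0) := by
      intro ω
      rw [Finset.card_filter]
      push_cast
      rfl
    rw [Finset.sum_congr rfl (fun ω _ => hcard ω), Finset.sum_comm,
      Finset.sum_congr rfl (fun b _ => count_ge_two x N b), Finset.sum_const, Finset.card_univ,
      Fintype.card_fin, nsmul_eq_mul]
  rw [hS]
  obtain ⟨m, rfl⟩ : ∃ m, x = m + 2 := ⟨x - 2, by omega⟩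
  have hx1 : m + 2 - 1 = m + 1 := rfl
  set q : ℝ := ((N:ℝ)-1)/N with hqdef
  have h1N : (1:ℝ) - 1/N = q := by rw [hqdef]; field_simp
  constructor
  · rw [hx1, h1N, hqdef]
    push_cast
    simp only [div_pow]
    field_simp
    ring
  · -- the lower bound
    have hq0 : (0:ℝ) ≤ q := div_nonneg (by linarith) hNpos.le
    have hq1 : q ≤ 1 := by rw [hqdef, div_le_one hNpos]; linarith
    have hQ : (1:ℝ)/3 ≤ q^m := by
      have h1 := aux_third N hN2
      have h2 : q^(N-2) ≤ q^m :=
        pow_le_pow_of_le_one hq0 hq1 (by omega : m ≤ N - 2)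
      rw [← hqdef] at h1
      linarith
    have hsum1 : 1/(N:ℝ) + q = 1 := by rw [hqdef]; field_simp; ring
    have hbin := add_pow (1/(N:ℝ)) q (m+2)
    rw [hsum1, one_pow] at hbin
    rw [Finset.range_eq_Ico,
      ← Finset.sum_Ico_consecutive _ (show 0 ≤ 3 by omega) (show 3 ≤ m+2+1 by omega)] at hbin
    have hR : 0 ≤ ∑ k ∈ Finset.Ico 3 (m+2+1),
        (1/(N:ℝ))^k * q^(m+2-k) * ((m+2).choose k) := by
      apply Finset.sum_nonneg
      intro k _
      positivity
    have hfirst : ∑ k ∈ Finset.Ico 0 3, (1/(N:ℝ))^k * q^(m+2-k) * ((m+2).choose k)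
        = q^(m+2) + (1/N) * q^(m+1) * ((m:ℝ)+2)
          + (1/N)^2 * q^m * (((m:ℝ)+2) * ((m:ℝ)+1) / 2) := by
      rw [← Finset.range_eq_Ico]
      rw [Finset.sum_range_succ, Finset.sum_range_succ, Finset.sum_range_one]
      have hc2 : (((m+2).choose 2 : ℕ) : ℝ) = ((m:ℝ)+2) * ((m:ℝ)+1) / 2 := by
        rw [Nat.cast_choose_two]
        push_cast
        ring
      simp only [hc2, pow_zero, pow_one, Nat.choose_zero_right, Nat.choose_one_right,
        Nat.choose_self, Nat.cast_one, Nat.cast_add, Nat.cast_ofNat]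
      push_cast
      ring
    rw [hfirst] at hbin
    have hkey : (1/(N:ℝ))^2 * q^m * (((m:ℝ)+2) * ((m:ℝ)+1) / 2)
        ≤ 1 - q^(m+2) - ((m:ℝ)+2) * (1/N) * q^(m+1) := by linarith
    have hid : (N:ℝ) * ((N:ℝ)^(m+2) - ((N:ℝ)-1)^(m+2) - ((m+2:ℕ):ℝ)*((N:ℝ)-1)^(m+2-1)) / (N:ℝ)^(m+2)
        = (N:ℝ) * (1 - q^(m+2) - ((m:ℝ)+2) * (1/N) * q^(m+1)) := by
      rw [hx1, hqdef]
      push_cast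
      simp only [div_pow]
      field_simp
      ring
    rw [hid]
    have hstep1 : ((m:ℝ)+2) * (((m:ℝ)+2)-1) / (6*N)
        ≤ (N:ℝ) * ((1/(N:ℝ))^2 * q^m * (((m:ℝ)+2) * ((m:ℝ)+1) / 2)) := by
      have hc : (0:ℝ) ≤ ((m:ℝ)+2) * ((m:ℝ)+1) := by positivity
      have e1 : ((m:ℝ)+2) * (((m:ℝ)+2)-1) / (6*N)
          = (1/3) * (((m:ℝ)+2) * ((m:ℝ)+1) / (2*N)) := by ring
      have e2 : (N:ℝ) * ((1/(N:ℝ))^2 * q^m * (((m:ℝ)+2) * ((m:ℝ)+1) / 2))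
          = q^m * (((m:ℝ)+2) * ((m:ℝ)+1) / (2*N)) := by field_simp
      rw [e1, e2]
      apply mul_le_mul_of_nonneg_right (by linarith) (by positivity)
    have hstep2 : (N:ℝ) * ((1/(N:ℝ))^2 * q^m * (((m:ℝ)+2) * ((m:ℝ)+1) / 2))
        ≤ (N:ℝ) * (1 - q^(m+2) - ((m:ℝ)+2) * (1/N) * q^(m+1)) :=
      mul_le_mul_of_nonneg_left hkey hNpos.le
    push_cast
    linarith
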